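/- (Lemma 3.2, part 1) Let ℓ > 0 and let n ≥ 1 be an integer. If μ_{n,ℓ} and μ_{n+1,ℓ} are the unique points in (ℓ/2, ∞) at which h_{n,ℓ} and h_{n+1,ℓ}, respectively, attain their minimum over (ℓ/2, ∞), then μ_{n+1,ℓ} > μ_{n,ℓ} and h_{n+1,ℓ}(μ_{n+1,ℓ}) > h_{n,ℓ}(μ_{n,ℓ}), i.e., ν_{n+1,ℓ} > ν_{n,ℓ} for the minimum values ν. -/

import Mathlib

set_option linter.unreachableTactic false
set_option linter.unusedTactic false

/-- `h ℓ n y = ((2y+ℓ)^(2n+1) + (2y−ℓ)^(2n+1)) / (4·(4y²−ℓ²)^n)`. -/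
noncomputable def catenoidH (ℓ : ℝ) (n : ℕ) (y : ℝ) : ℝ :=
  ((2*y + ℓ)^(2*n+1) + (2*y - ℓ)^(2*n+1)) / (4 * (4*y^2 - ℓ^2)^n)

/-- Pointwise strict monotonicity in `n`. -/
lemma catenoidH_step (ℓ : ℝ) (hℓ : 0 < ℓ) (n : ℕ) (y : ℝ) (hy : ℓ/2 < y) :
    catenoidH ℓ n y < catenoidH ℓ (n+1) y := by
  have hb : 0 < 2*y - ℓ := by linarith
  have ha : 2*y - ℓ < 2*y + ℓ := by linarith
  have ha0 : 0 < 2*y + ℓ := by linarith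
  have hd : 0 < 4*y^2 - ℓ^2 := by nlinarith
  unfold catenoidH
  rw [div_lt_div_iff₀ (by positivity) (by positivity)]
  have eA : (2*y+ℓ)^(2*(n+1)+1) = (2*y+ℓ)^(2*n+1)*(2*y+ℓ)^2 := by
    rw [← pow_add]; congr 1 <;> omega
  have eB : (2*y-ℓ)^(2*(n+1)+1) = (2*y-ℓ)^(2*n+1)*(2*y-ℓ)^2 := by
    rw [← pow_add]; congr 1 <;> omega
  have eD : (4*y^2-ℓ^2)^(n+1) = (4*y^2-ℓ^2)^n*(4*y^2-ℓ^2) := pow_succ _ _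
  rw [eA, eB, eD]
  have hpq : (2*y-ℓ)^(2*n+1)*(2*y-ℓ) < (2*y+ℓ)^(2*n+1)*(2*y+ℓ) := by
    rw [← pow_succ, ← pow_succ]
    exact pow_lt_pow_left₀ ha (le_of_lt hb) (by omega)
  have hr : 0 < (4*y^2-ℓ^2)^n := pow_pos hd n
  nlinarith [mul_pos hr (mul_pos (sub_pos.2 ha) (sub_pos.2 hpq))]

lemma hasDerivAt_catenoidH (ℓ : ℝ) (m : ℕ) (y : ℝ) (hy : 4*y^2 - ℓ^2 ≠ 0) :
    HasDerivAt (catenoidH ℓ m)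
      (((↑(2*m+1) * (2*y+ℓ)^(2*m) * 2 + ↑(2*m+1) * (2*y-ℓ)^(2*m) * 2) * (4*(4*y^2-ℓ^2)^m)
        - ((2*y+ℓ)^(2*m+1) + (2*y-ℓ)^(2*m+1)) * (4*(↑m * (4*y^2-ℓ^2)^(m-1) * (8*y))))
        / (4*(4*y^2-ℓ^2)^m)^2) y := by
  have h1 : HasDerivAt (fun y : ℝ => 2*y+ℓ) 2 y := by
    simpa using ((hasDerivAt_id y).const_mul 2).add_const ℓ
  have h2 : HasDerivAt (fun y : ℝ => 2*y-ℓ) 2 y := by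
    simpa using ((hasDerivAt_id y).const_mul 2).sub_const ℓ
  have hn1 : HasDerivAt (fun y : ℝ => (2*y+ℓ)^(2*m+1)) (↑(2*m+1) * (2*y+ℓ)^(2*m) * 2) y := by
    simpa using h1.fun_pow (2*m+1)
  have hn2 : HasDerivAt (fun y : ℝ => (2*y-ℓ)^(2*m+1)) (↑(2*m+1) * (2*y-ℓ)^(2*m) * 2) y := by
    simpa using h2.fun_pow (2*m+1)
  have hin : HasDerivAt (fun y : ℝ => 4*y^2-ℓ^2) (8*y) y := by
    have := ((hasDerivAt_pow 2 y).const_mul 4).sub_const (ℓ^2)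
    simpa using this.congr_deriv (by ring)
  have hden : HasDerivAt (fun y : ℝ => 4*(4*y^2-ℓ^2)^m) (4*(↑m * (4*y^2-ℓ^2)^(m-1) * (8*y))) y :=
    (hin.pow m).const_mul 4
  exact (hn1.add hn2).div hden (by positivity)

/-- First-order condition at an interior minimum. -/
lemma catenoidH_crit (ℓ : ℝ) (hℓ : 0 < ℓ) (m : ℕ) (hm : 1 ≤ m) (μ : ℝ)
    (hμ : μ ∈ Set.Ioi (ℓ/2))
    (hmin : ∀ y ∈ Set.Ioi (ℓ/2), catenoidH ℓ m μ ≤ catenoidH ℓ m y) :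
    ((m:ℝ)+1) * ((2*μ+ℓ)*(2*μ-ℓ)) * ((2*μ+ℓ)^(2*m) + (2*μ-ℓ)^(2*m))
      = m * ((2*μ+ℓ)^(2*m)*(2*μ+ℓ)^2 + (2*μ-ℓ)^(2*m)*(2*μ-ℓ)^2) := by
  have hμ' : ℓ/2 < μ := hμ
  have hb : 0 < 2*μ - ℓ := by linarith
  have ha : 0 < 2*μ + ℓ := by linarith
  have hd : 0 < 4*μ^2 - ℓ^2 := by nlinarith
  have hder := hasDerivAt_catenoidH ℓ m μ (ne_of_gt hd)
  have hloc : IsLocalMin (catenoidH ℓ m) μ :=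
    Filter.eventually_of_mem (isOpen_Ioi.mem_nhds hμ) (fun y hy => hmin y hy)
  have hzero := hloc.hasDerivAt_eq_zero hder
  rw [div_eq_zero_iff] at hzero
  have hD : (4*(4*μ^2-ℓ^2)^m) ^ 2 ≠ 0 := by positivity
  have hnum := hzero.resolve_right hD
  have hdm : (4*μ^2-ℓ^2)^m = (4*μ^2-ℓ^2)^(m-1)*(4*μ^2-ℓ^2) := by
    have h := pow_succ (4*μ^2-ℓ^2) (m-1)
    rwa [Nat.sub_add_cancel hm] at h
  have eA : (2*μ+ℓ)^(2*m+1) = (2*μ+ℓ)^(2*m)*(2*μ+ℓ) := pow_succ _ _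
  have eB : (2*μ-ℓ)^(2*m+1) = (2*μ-ℓ)^(2*m)*(2*μ-ℓ) := pow_succ _ _
  rw [hdm, eA, eB] at hnum
  have he : (0:ℝ) < (4*μ^2-ℓ^2)^(m-1) := pow_pos hd _
  set e := (4*μ^2-ℓ^2)^(m-1) with hedef
  set A := (2*μ+ℓ)^(2*m) with hAdef
  set B := (2*μ-ℓ)^(2*m) with hBdef
  push_cast at hnum
  have hbr : 8*e*((2*(m:ℝ)+1)*(A+B)*((2*μ+ℓ)*(2*μ-ℓ)) - m*(4*μ)*(A*(2*μ+ℓ)+B*(2*μ-ℓ))) = 0 := by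
    linear_combination hnum
  have hbr2 : (2*(m:ℝ)+1)*(A+B)*((2*μ+ℓ)*(2*μ-ℓ)) - m*(4*μ)*(A*(2*μ+ℓ)+B*(2*μ-ℓ)) = 0 := by
    have h8e : (8:ℝ)*e ≠ 0 := by positivity
    exact (mul_eq_zero.mp hbr).resolve_left h8e
  linear_combination hbr2

/-- Auxiliary one-variable function: `Pf m u = m·(u^{m+1}+u^{-(m+1)}) − (m+1)·(u^m+u^{-m})`. -/
noncomputable def Pf (m : ℕ) (u : ℝ) : ℝ :=
  m * (u^(m+1) + (u⁻¹)^(m+1)) - (m+1) * (u^m + (u⁻¹)^m)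

lemma Pf_eq_zero (m : ℕ) (a b : ℝ) (hb : 0 < b) (hab : b < a)
    (hE : ((m:ℝ)+1) * (a*b) * (a^(2*m) + b^(2*m))
      = m * (a^(2*m)*a^2 + b^(2*m)*b^2)) : Pf m (a/b) = 0 := by
  have ha : 0 < a := lt_trans hb hab
  have ha' : a ≠ 0 := ne_of_gt ha
  have hb' : b ≠ 0 := ne_of_gt hb
  have key : Pf m (a/b) * (a^(m+1)*b^(m+1))
      = (m:ℝ)*(a^(2*m)*a^2 + b^(2*m)*b^2) - ((m:ℝ)+1)*(a*b)*(a^(2*m)+b^(2*m)) := by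
    unfold Pf
    rw [inv_div]
    simp only [div_pow]
    field_simp
    ring
  have h0 : Pf m (a/b) * (a^(m+1)*b^(m+1)) = 0 := by
    rw [key]; linear_combination -hE
  have hm0 : a^(m+1)*b^(m+1) ≠ 0 := by positivity
  exact (mul_eq_zero.mp h0).resolve_right hm0

lemma Pf_pos (m : ℕ) (hm : 1 ≤ m) (t : ℝ) (ht : 1 < t) (hP : Pf m t = 0) :
    0 < Pf (m+1) t := by
  have ht0 : 0 < t := lt_trans one_pos ht
  have ht' : t ≠ 0 := ne_of_gt ht0
  have hinv : t * t⁻¹ = 1 := mul_inv_cancel₀ ht'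
  have hrec : t^(m+2) + (t⁻¹)^(m+2)
      = (t + t⁻¹) * (t^(m+1) + (t⁻¹)^(m+1)) - (t^m + (t⁻¹)^m) := by
    have h1 : t * (t⁻¹)^(m+1) = (t⁻¹)^m := by
      rw [pow_succ]; rw [mul_comm ((t⁻¹)^m) t⁻¹, ← mul_assoc, hinv, one_mul]
    have h2 : t⁻¹ * t^(m+1) = t^m := by
      rw [pow_succ]; rw [mul_comm (t^m) t, ← mul_assoc, inv_mul_cancel₀ ht', one_mul]
    linear_combination -h1 - h2
  have hc1 : 0 < t^(m+1) + (t⁻¹)^(m+1) := by positivity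
  have hgap : 0 < t + t⁻¹ - 2 := by
    have h := mul_pos (mul_pos (sub_pos.2 ht) (sub_pos.2 ht)) (inv_pos.2 ht0)
    nlinarith [hinv]
  have key : (m:ℝ) * Pf (m+1) t
      = (m:ℝ)*((m:ℝ)+1)*(t^(m+1) + (t⁻¹)^(m+1))*(t + t⁻¹ - 2) := by
    unfold Pf at hP ⊢
    push_cast
    linear_combination ((m:ℝ)*((m:ℝ)+1)) * hrec + (m:ℝ) * hP
  have hm0 : (0:ℝ) < m := by exact_mod_cast hm
  have : 0 < (m:ℝ) * Pf (m+1) t := by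
    rw [key]; positivity
  nlinarith [this]

lemma Pf_hasDerivAt (m : ℕ) (x : ℝ) (hx : x ≠ 0) :
    HasDerivAt (Pf m)
      ((m:ℝ) * (↑(m+1) * x^m + ↑(m+1) * (x⁻¹)^m * (-(x^2)⁻¹))
        - ((m:ℝ)+1) * (↑m * x^(m-1) + ↑m * (x⁻¹)^(m-1) * (-(x^2)⁻¹))) x := by
  have hp1 : HasDerivAt (fun x : ℝ => x^(m+1)) (↑(m+1) * x^m) x := by
    simpa using hasDerivAt_pow (m+1) x
  have hp2 : HasDerivAt (fun x : ℝ => (x⁻¹)^(m+1)) (↑(m+1) * (x⁻¹)^m * (-(x^2)⁻¹)) x := by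
    simpa using (hasDerivAt_inv hx).fun_pow (m+1)
  have hp3 : HasDerivAt (fun x : ℝ => x^m) (↑m * x^(m-1)) x := hasDerivAt_pow m x
  have hp4 : HasDerivAt (fun x : ℝ => (x⁻¹)^m) (↑m * (x⁻¹)^(m-1) * (-(x^2)⁻¹)) x :=
    (hasDerivAt_inv hx).pow m
  exact ((hp1.add hp2).const_mul (m:ℝ)).sub ((hp3.add hp4).const_mul ((m:ℝ)+1))

lemma Pf_mono (m : ℕ) (hm : 1 ≤ m) : StrictMonoOn (Pf m) (Set.Ici (1:ℝ)) := by
  obtain ⟨k, rfl⟩ : ∃ k, m = k+1 := ⟨m-1, (Nat.succ_pred_eq_of_pos hm).symm⟩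
  apply strictMonoOn_of_deriv_pos (convex_Ici 1)
  · apply ContinuousOn.sub
    · exact (continuousOn_const.mul ((continuousOn_pow _).add
        ((continuousOn_id.inv₀ (fun x hx => ne_of_gt (lt_of_lt_of_le one_pos hx))).pow _)))
    · exact (continuousOn_const.mul ((continuousOn_pow _).add
        ((continuousOn_id.inv₀ (fun x hx => ne_of_gt (lt_of_lt_of_le one_pos hx))).pow _)))
  · intro x hx
    rw [interior_Ici] at hx
    have hx1 : 1 < x := hx
    have hx0 : (0:ℝ) < x := lt_trans one_pos hx1
    have hx' : x ≠ 0 := ne_of_gt hx0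
    rw [(Pf_hasDerivAt (k+1) x hx').deriv]
    have hinv : x * x⁻¹ = 1 := mul_inv_cancel₀ hx'
    have hsq : (x^2)⁻¹ = x⁻¹ * x⁻¹ := by rw [sq, mul_inv]
    have key : ((k+1:ℕ):ℝ) * (↑(k+1+1) * x^(k+1) + ↑(k+1+1) * (x⁻¹)^(k+1) * (-(x^2)⁻¹))
        - (((k+1:ℕ):ℝ)+1) * (↑(k+1) * x^(k+1-1) + ↑(k+1) * (x⁻¹)^(k+1-1) * (-(x^2)⁻¹))
        = ((k:ℝ)+1) * ((k:ℝ)+2) * (x-1) * (x^k + (x⁻¹)^(k+3)) := by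
      simp only [Nat.add_sub_cancel]
      push_cast
      rw [hsq]
      linear_combination (-((k:ℝ)+1)*((k:ℝ)+2)*(x⁻¹)^(k+2)) * hinv
    rw [key]
    have h1 : 0 < (x:ℝ) - 1 := by linarith
    positivity

theorem stmt_12 (ℓ : ℝ) (hℓ : 0 < ℓ) (n : ℕ) (hn : 1 ≤ n)
    (μn μn1 : ℝ) (hμn : μn ∈ Set.Ioi (ℓ/2)) (hμn1 : μn1 ∈ Set.Ioi (ℓ/2))
    (hminn : ∀ y ∈ Set.Ioi (ℓ/2), catenoidH ℓ n μn ≤ catenoidH ℓ n y)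
    (huniqn : ∀ y ∈ Set.Ioi (ℓ/2),
      (∀ z ∈ Set.Ioi (ℓ/2), catenoidH ℓ n y ≤ catenoidH ℓ n z) → y = μn)
    (hminn1 : ∀ y ∈ Set.Ioi (ℓ/2), catenoidH ℓ (n+1) μn1 ≤ catenoidH ℓ (n+1) y)
    (huniqn1 : ∀ y ∈ Set.Ioi (ℓ/2),
      (∀ z ∈ Set.Ioi (ℓ/2), catenoidH ℓ (n+1) y ≤ catenoidH ℓ (n+1) z) → y = μn1) :
    μn < μn1 ∧ catenoidH ℓ n μn < catenoidH ℓ (n+1) μn1 := by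
  have hμn' : ℓ/2 < μn := hμn
  have hμn1' : ℓ/2 < μn1 := hμn1
  have hbn : 0 < 2*μn - ℓ := by linarith
  have hban : 2*μn - ℓ < 2*μn + ℓ := by linarith
  have hbn1 : 0 < 2*μn1 - ℓ := by linarith
  have hban1 : 2*μn1 - ℓ < 2*μn1 + ℓ := by linarith
  -- first-order conditions
  have E1 := catenoidH_crit ℓ hℓ n hn μn hμn hminn
  have E2 := catenoidH_crit ℓ hℓ (n+1) (by omega) μn1 hμn1 hminn1
  set t : ℝ := (2*μn+ℓ)/(2*μn-ℓ) with htdef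
  set T : ℝ := (2*μn1+ℓ)/(2*μn1-ℓ) with hTdef
  have ht : 1 < t := (one_lt_div hbn).2 hban
  have hT : 1 < T := (one_lt_div hbn1).2 hban1
  have hPt : Pf n t = 0 := Pf_eq_zero n _ _ hbn hban (by push_cast at E1 ⊢; linarith [E1])
  have hPT : Pf (n+1) T = 0 :=
    Pf_eq_zero (n+1) _ _ hbn1 hban1 (by push_cast at E2 ⊢; linarith [E2])
  have hpos : 0 < Pf (n+1) t := Pf_pos n hn t ht hPt
  have hmono := Pf_mono (n+1) (by omega)
  have hTt : T < t := by
    by_contra h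
    push_neg at h   -- t ≤ T
    rcases h.lt_or_eq with h' | h'
    · have := hmono (le_of_lt ht : t ∈ Set.Ici (1:ℝ)) (le_of_lt hT : T ∈ Set.Ici (1:ℝ)) h'
      rw [hPT] at this
      linarith
    · rw [h', hPT] at hpos
      exact lt_irrefl 0 hpos
  constructor
  · by_contra hle
    push_neg at hle   -- μn1 ≤ μn
    have : t ≤ T := by
      rw [htdef, hTdef, div_le_div_iff₀ hbn hbn1]
      nlinarith [mul_nonneg hℓ.le (sub_nonneg.2 hle)]
    linarith
  · exact lt_of_le_of_lt (hminn μn1 hμn1) (catenoidH_step ℓ hℓ n μn1 hμn1')
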